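/- For every prime number t and every positive integer ℓ that is a multiple of t − 1, there exists an ℓt × t Vatican design. -/

import Mathlib

/-- A uniform `n × t` crossover design: each row is a bijection `Fin t → Fin t`,
`t` divides `n`, and each treatment appears exactly `n / t` times in each column. -/
def IsUniformDesign (n t : ℕ) (D : Fin n → Fin t → Fin t) : Prop :=
  t ∣ n ∧ (∀ i : Fin n, Function.Bijective (D i)) ∧
  ∀ (j x : Fin t), Nat.card {i : Fin n // D i j = x} = n / t

/-- `o_d(x, y)`: the number of pairs `(i, j)` with `j + d < t`, `D i j = x` and
`D i (j + d) = y`. -/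
noncomputable def designPairCount (n t : ℕ) (D : Fin n → Fin t → Fin t) (d : ℕ) (x y : Fin t) : ℕ :=
  Nat.card {p : Fin n × Fin t //
    ∃ h : (p.2 : ℕ) + d < t, D p.1 p.2 = x ∧ D p.1 ⟨(p.2 : ℕ) + d, h⟩ = y}

/-- A Roman-`k` design: a uniform design with `o_d(x, y) ≤ n / t` for all
`1 ≤ d ≤ k` and all distinct treatments `x ≠ y`. -/
def IsRomanDesign (n t k : ℕ) (D : Fin n → Fin t → Fin t) : Prop :=
  IsUniformDesign n t D ∧
  ∀ d : ℕ, 1 ≤ d → d ≤ k → ∀ x y : Fin t, x ≠ y → designPairCount n t D d x y ≤ n / t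

/-- A Vatican design is a Roman-`(t - 1)` design. -/
def IsVaticanDesign (n t : ℕ) (D : Fin n → Fin t → Fin t) : Prop :=
  IsRomanDesign n t (t - 1) D

section VaticanAux

variable (t : ℕ) [NeZero t]

/-- `Fin t → ZMod t`. -/
def vToF (j : Fin t) : ZMod t := (j.val : ZMod t)

/-- `ZMod t → Fin t`. -/
def vToFin (z : ZMod t) : Fin t := ⟨z.val, ZMod.val_lt z⟩

lemma vToFin_vToF (j : Fin t) : vToFin t (vToF t j) = j := by
  ext
  simp [vToFin, vToF, ZMod.val_cast_of_lt j.isLt]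

lemma vToF_vToFin (z : ZMod t) : vToF t (vToFin t z) = z := by
  simp [vToFin, vToF, ZMod.natCast_zmod_val]

lemma vToF_injective : Function.Injective (vToF t) :=
  Function.LeftInverse.injective (vToFin_vToF t)

lemma vToFin_eq_iff (z : ZMod t) (x : Fin t) : vToFin t z = x ↔ z = vToF t x := by
  constructor
  · rintro rfl; exact (vToF_vToFin t z).symm
  · rintro rfl; exact vToFin_vToF t x

variable (m : ℕ)

/-- The `a`-coefficient associated to a decoded row index. -/
def vA (p : (Fin m × Fin (t - 1)) × Fin t) : ZMod t := ((p.1.2.val + 1 : ℕ) : ZMod t)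

/-- The `b`-coefficient associated to a decoded row index. -/
def vB (p : (Fin m × Fin (t - 1)) × Fin t) : ZMod t := vToF t p.2

lemma vA_ne_zero (ht : 1 < t) (p : (Fin m × Fin (t - 1)) × Fin t) : vA t m p ≠ 0 := by
  intro h
  rw [vA, ZMod.natCast_eq_zero_iff] at h
  have h1 := p.1.2.isLt
  have := Nat.le_of_dvd (Nat.succ_pos _) h
  omega

lemma vA_injective (ht : 1 < t) (p q : (Fin m × Fin (t - 1)) × Fin t)
    (h : vA t m p = vA t m q) : p.1.2 = q.1.2 := by
  have hp := p.1.2.isLt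
  have hq := q.1.2.isLt
  rw [vA, vA] at h
  have h1 : ((p.1.2.val + 1 : ℕ) : ZMod t).val = ((q.1.2.val + 1 : ℕ) : ZMod t).val := by rw [h]
  rw [ZMod.val_cast_of_lt (by omega), ZMod.val_cast_of_lt (by omega)] at h1
  exact Fin.ext (by omega)

/-- The row of a Vatican design determined by coefficients a, b. -/
def vRow (a b : ZMod t) (j : Fin t) : Fin t := vToFin t (a * vToF t j + b)

lemma vRow_bijective {a : ZMod t} (ha : a ≠ 0) (ht : Fact t.Prime) (b : ZMod t) :
    Function.Bijective (vRow t a b) := by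
  apply Function.bijective_iff_has_inverse.mpr
  refine ⟨fun j => vToFin t ((vToF t j - b) * a⁻¹), ?_, ?_⟩
  · intro j
    show vToFin t ((vToF t (vToFin t (a * vToF t j + b)) - b) * a⁻¹) = j
    rw [vToF_vToFin]
    have : (a * vToF t j + b - b) * a⁻¹ = vToF t j := by field_simp; ring
    rw [this, vToFin_vToF]
  · intro j
    show vToFin t (a * vToF t (vToFin t ((vToF t j - b) * a⁻¹)) + b) = j
    rw [vToF_vToFin]
    have : a * ((vToF t j - b) * a⁻¹) + b = vToF t j := by field_simp; ring
    rw [this, vToFin_vToF]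

end VaticanAux

theorem vatican_main (t : ℕ) [NeZero t] (ht : Nat.Prime t) (m n : ℕ)
    (e : Fin n ≃ (Fin m × Fin (t - 1)) × Fin t) (hn : n = m * (t - 1) * t) :
    IsVaticanDesign n t (fun i j => vRow t (vA t m (e i)) (vB t m (e i)) j) := by
  haveI : Fact t.Prime := ⟨ht⟩
  have ht1 : 1 < t := ht.one_lt
  have hnt : n / t = m * (t - 1) := by
    rw [hn, Nat.mul_div_cancel _ ht.pos]
  set D : Fin n → Fin t → Fin t := fun i j => vRow t (vA t m (e i)) (vB t m (e i)) j with hD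
  have hcard : Nat.card (Fin m × Fin (t - 1)) = m * (t - 1) := by
    simp [Nat.card_eq_fintype_card]
  -- key equation extraction
  have key : ∀ (i : Fin n) (j x : Fin t), D i j = x ↔
      vA t m (e i) * vToF t j + vB t m (e i) = vToF t x := by
    intro i j x
    exact vToFin_eq_iff t _ x
  refine ⟨⟨⟨m * (t-1), by rw [hn]; ring⟩, fun i => vRow_bijective t (vA_ne_zero t m ht1 _) ⟨ht⟩ _, ?_⟩, ?_⟩
  · -- column counts
    intro j x
    rw [hnt, ← hcard]
    apply Nat.card_congr
    have eq1 : {i : Fin n // D i j = x} ≃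
        {p : (Fin m × Fin (t - 1)) × Fin t //
          vA t m p * vToF t j + vB t m p = vToF t x} :=
      Equiv.subtypeEquiv e (fun i => key i j x)
    refine eq1.trans ?_
    · -- {p // vA p * J + vB p = vToF x} ≃ Fin m × Fin (t-1)
      refine
        { toFun := fun s => s.1.1
          invFun := fun g =>
            ⟨((g.1, g.2), vToFin t (vToF t x - ((g.2.val + 1 : ℕ) : ZMod t) * vToF t j)), ?_⟩
          left_inv := ?_
          right_inv := ?_ }
      · show vA t m _ * vToF t j + vB t m _ = vToF t x
        rw [vA, vB]
        simp only
        rw [vToF_vToFin]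
        ring
      · rintro ⟨⟨⟨c, a⟩, b⟩, hs⟩
        have hs' : vA t m ((c, a), b) * vToF t j + vB t m ((c, a), b) = vToF t x := hs
        rw [vA, vB] at hs'
        simp only at hs' ⊢
        apply Subtype.ext
        simp only [Prod.mk.injEq, true_and]
        have : vToF t b = vToF t x - ((a.val + 1 : ℕ) : ZMod t) * vToF t j := by
          rw [← hs']; ring
        apply vToF_injective t
        rw [vToF_vToFin, this]
      · intro g; rfl
  · -- Roman condition
    intro d hd1 hd2 x y hxy
    rw [designPairCount, hnt, ← hcard]
    have hdz : (d : ZMod t) ≠ 0 := by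
      rw [Ne, ZMod.natCast_eq_zero_iff]
      intro h
      have := Nat.le_of_dvd (by omega) h
      omega
    set P : Fin n × Fin t → Prop := fun p =>
      ∃ h : (p.2 : ℕ) + d < t, D p.1 p.2 = x ∧ D p.1 ⟨(p.2 : ℕ) + d, h⟩ = y with hP
    have hf : ∀ p : {p : Fin n × Fin t // P p}, (p.1.2 : ℕ) < t - 1 := by
      intro p
      obtain ⟨hlt, -⟩ := p.2
      omega
    -- injection into Fin m × Fin (t-1)
    apply Nat.card_le_card_of_injective
      (fun p : {p : Fin n × Fin t // P p} => ((e p.1.1).1.1, (⟨(p.1.2 : ℕ), hf p⟩ : Fin (t - 1))))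
    rintro ⟨⟨i1, j1⟩, h1lt, h1x, h1y⟩ ⟨⟨i2, j2⟩, h2lt, h2x, h2y⟩ heq
    simp only [Prod.mk.injEq, Fin.mk.injEq] at heq
    obtain ⟨hc, hj⟩ := heq
    have hjj : j1 = j2 := Fin.ext hj
    subst hjj
    -- derive equalities of a and b coefficients
    have ext1 : ∀ (i : Fin n) (h : (j1 : ℕ) + d < t), D i j1 = x → D i ⟨(j1:ℕ)+d, h⟩ = y →
        vA t m (e i) = (vToF t y - vToF t x) * (d : ZMod t)⁻¹ ∧
        vB t m (e i) = vToF t x - vA t m (e i) * vToF t j1 := by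
      intro i h hx hy
      rw [key] at hx hy
      have hjd : vToF t (⟨(j1:ℕ)+d, h⟩ : Fin t) = vToF t j1 + (d : ZMod t) := by
        simp [vToF]
      rw [hjd] at hy
      have ha : vA t m (e i) * (d : ZMod t) = vToF t y - vToF t x := by
        have := sub_eq_sub_iff_sub_eq_sub.mp (congrArg₂ (· - ·) hy hx)
        linear_combination hy - hx
      constructor
      · field_simp [hdz] at ha ⊢
        linear_combination ha
      · linear_combination hx
    obtain ⟨ha1, hb1⟩ := ext1 i1 h1lt h1x h1y
    obtain ⟨ha2, hb2⟩ := ext1 i2 h2lt h2x h2y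
    have hA : vA t m (e i1) = vA t m (e i2) := by rw [ha1, ha2]
    have hB : vB t m (e i1) = vB t m (e i2) := by rw [hb1, hb2, hA]
    have haidx : (e i1).1.2 = (e i2).1.2 := vA_injective t m ht1 _ _ hA
    have hbidx : (e i1).2 = (e i2).2 := vToF_injective t hB
    have hei : e i1 = e i2 := by
      apply Prod.ext
      · exact Prod.ext hc haidx
      · exact hbidx
    have : i1 = i2 := e.injective hei
    subst this
    rfl

theorem vatican_design_of_prime (t : ℕ) (ht : Nat.Prime t)
    (ℓ : ℕ) (hℓ : 0 < ℓ) (hdvd : (t - 1) ∣ ℓ) :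
    ∃ D : Fin (ℓ * t) → Fin t → Fin t, IsVaticanDesign (ℓ * t) t D := by
  obtain ⟨m, hm⟩ := hdvd
  have hℓm : ℓ = m * (t - 1) := by rw [hm]; ring
  have hn : ℓ * t = m * (t - 1) * t := by rw [hℓm]
  haveI : NeZero t := ⟨ht.ne_zero⟩
  let e : Fin (ℓ * t) ≃ (Fin m × Fin (t - 1)) × Fin t :=
    (finCongr hn).trans ((finProdFinEquiv.symm).trans
      (Equiv.prodCongr finProdFinEquiv.symm (Equiv.refl _)))
  exact ⟨_, vatican_main t ht m (ℓ * t) e hn⟩
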